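/- arXiv:2107.08023 — 2 statements merged into one kernel-verified Lean document; each statement's English description precedes it below -/
import Mathlib

section
/- Let n ≥ 2 and 2 ≤ k ≤ n. Let (Z_1,…,Z_n,Z) be nonnegative random variables whose joint distribution has a density on ℝ^{n+1} with respect to Lebesgue measure that is invariant under every permutation of its first n arguments (in particular the Z_i are almost surely pairwise distinct). Let T = Z_{n-k+1:n} + min(Z_{n-k+2:n} − Z_{n-k+1:n}, Z). Then for all 0 ≤ t ≤ s, P(T > s, t ≤ Z_{n-k+1:n} ≤ s) = n·C(n−1,n−k)·P(Z_1 > s, …, Z_{k−1} > s, Z_n + Z > s, Z_k < Z_n, …, Z_{n−1} < Z_n, t ≤ Z_n ≤ s). -/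
open MeasureTheory ProbabilityTheory

/-- `orderStat Z j ω` is the `j`-th smallest value (1-indexed) among `Z 0 ω, …, Z (n-1) ω`. -/
noncomputable def orderStat {Ω : Type*} {n : ℕ} (Z : Fin n → Ω → ℝ) (j : ℕ) (ω : Ω) : ℝ :=
  ((List.ofFn fun i => Z i ω).mergeSort (fun x y => x ≤ y)).getD (j - 1) 0

section ListLemmas

open List in
lemma countP_ge_of_sorted {l : List ℝ} (hl : l.Pairwise (· ≤ ·)) {m : ℕ} (hm : m < l.length)
    {s : ℝ} (h : l[m] ≤ s) : m + 1 ≤ l.countP (fun x => decide (x ≤ s)) := by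
  have hsub : l.take (m+1) ++ l.drop (m+1) = l := l.take_append_drop (m+1)
  have hlen : (l.take (m+1)).length = m + 1 := by simp [List.length_take]; omega
  have hall : ∀ x ∈ l.take (m+1), x ≤ s := by
    intro x hx
    obtain ⟨i, hi, rfl⟩ := List.mem_iff_getElem.1 hx
    rw [List.getElem_take]
    have hi' : i < l.length := by simp [List.length_take] at hi; omega
    have : l[i] ≤ l[m] := by
      have := hl.rel_get_of_le (a := ⟨i, hi'⟩) (b := ⟨m, hm⟩)
        (by simp [Fin.le_def]; simp [List.length_take] at hi; omega)
      simpa using this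
    linarith
  calc m + 1 = (l.take (m+1)).countP (fun x => decide (x ≤ s)) := by
        rw [List.countP_eq_length.2 (by intro a ha; simpa using hall a ha), hlen]
    _ ≤ l.countP (fun x => decide (x ≤ s)) := by
        conv_rhs => rw [← hsub]
        rw [List.countP_append]; omega

open List in
lemma countP_le_of_sorted {l : List ℝ} (hl : l.Pairwise (· ≤ ·)) {m : ℕ} (hm : m < l.length)
    {s : ℝ} (h : s < l[m]) : l.countP (fun x => decide (x ≤ s)) ≤ m := by
  have hsub : l.take m ++ l.drop m = l := l.take_append_drop m
  have hdrop : (l.drop m).countP (fun x => decide (x ≤ s)) = 0 := by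
    rw [List.countP_eq_zero]
    intro a ha
    obtain ⟨i, hi, rfl⟩ := List.mem_iff_getElem.1 ha
    rw [List.getElem_drop]
    have hi' : m + i < l.length := by simp at hi; omega
    have : l[m] ≤ l[m+i] := by
      have := hl.rel_get_of_le (a := ⟨m, hm⟩) (b := ⟨m+i, hi'⟩) (by simp [Fin.le_def])
      simpa using this
    simp; linarith
  calc l.countP (fun x => decide (x ≤ s))
      = (l.take m).countP _ + (l.drop m).countP _ := by
        conv_lhs => rw [← hsub]; rw [List.countP_append]
    _ ≤ m := by
        rw [hdrop]
        have := List.countP_le_length (p := fun x => decide (x ≤ s)) (l := l.take m)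
        simp [List.length_take] at this ⊢; omega

lemma countP_ofFn {n : ℕ} (v : Fin n → ℝ) (p : ℝ → Bool) :
    (List.ofFn v).countP p = (Finset.univ.filter (fun j => p (v j) = true)).card := by
  rw [List.ofFn_eq_map, List.countP_map]
  simp [Fin.univ_def, Finset.filter, Finset.card, List.countP_eq_length_filter,
    Multiset.filter_coe]
  rfl

lemma sorted_ms (l : List ℝ) : (l.mergeSort (fun x y => decide (x ≤ y))).Pairwise (· ≤ ·) := by
  have := List.pairwise_mergeSort (le := fun x y : ℝ => decide (x ≤ y))
    (fun a b c => by simp; exact le_trans) (fun a b => by simp [le_total]) l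
  simpa using this

variable {n k : ℕ} (hk2 : 2 ≤ k) (hkn : k ≤ n)

lemma le_nk_of_le {v : Fin n → ℝ} {s : ℝ} {x : ℝ}
    (hx : x ∈ (List.ofFn v).mergeSort (fun x y => decide (x ≤ y))) (hxs : x ≤ s)
    (h1 : s < ((List.ofFn v).mergeSort (fun x y => decide (x ≤ y)))[n - k + 1]'(by
      rw [List.length_mergeSort, List.length_ofFn]; omega)) :
    x ≤ ((List.ofFn v).mergeSort (fun x y => decide (x ≤ y)))[n - k]'(by
      rw [List.length_mergeSort, List.length_ofFn]; omega) := by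
  set l := (List.ofFn v).mergeSort (fun x y => decide (x ≤ y)) with hldef
  have hlen : l.length = n := by rw [hldef, List.length_mergeSort, List.length_ofFn]
  have hl : l.Pairwise (· ≤ ·) := sorted_ms _
  obtain ⟨m, hm, rfl⟩ := List.mem_iff_getElem.1 hx
  by_cases hcase : m ≤ n - k
  · have := hl.rel_get_of_le (a := ⟨m, hm⟩) (b := ⟨n - k, by omega⟩) (by simp [Fin.le_def]; omega)
    simpa using this
  · exfalso
    have : l[n-k+1]'(by omega) ≤ l[m] := by
      have := hl.rel_get_of_le (a := ⟨n-k+1, by omega⟩) (b := ⟨m, hm⟩) (by simp [Fin.le_def]; omega)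
      simpa using this
    linarith

include hk2 hkn in
lemma lemA {v : Fin n → ℝ} {s : ℝ}
    (A : Finset (Fin n)) (i : Fin n) (hA : A.card = k - 1) (hi : i ∉ A)
    (hAs : ∀ j ∈ A, s < v j) (hlt : ∀ j, j ∉ A → j ≠ i → v j < v i) (his : v i ≤ s) :
    ((List.ofFn v).mergeSort (fun x y => decide (x ≤ y))).getD (n - k) 0 = v i ∧
    s < ((List.ofFn v).mergeSort (fun x y => decide (x ≤ y))).getD (n - k + 1) 0 := by
  set l := (List.ofFn v).mergeSort (fun x y => decide (x ≤ y)) with hldef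
  have hlen : l.length = n := by rw [hldef, List.length_mergeSort, List.length_ofFn]
  have hl : l.Pairwise (· ≤ ·) := sorted_ms _
  have hperm : l.Perm (List.ofFn v) := List.mergeSort_perm _ _
  have hnk : n - k < n := by omega
  have hnk1 : n - k + 1 < n := by omega
  have hcount : l.countP (fun x => decide (x ≤ s)) = n - k + 1 := by
    rw [hperm.countP_eq, countP_ofFn]
    have : (Finset.univ.filter (fun j => decide (v j ≤ s) = true)) = Aᶜ := by
      ext j
      simp only [Finset.mem_filter, Finset.mem_univ, true_and, Finset.mem_compl,
        decide_eq_true_eq]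
      constructor
      · intro hj hjA; exact absurd hj (not_le.2 (hAs j hjA))
      · intro hj
        by_cases hji : j = i
        · subst hji; exact his
        · exact le_of_lt (lt_of_lt_of_le (hlt j hj hji) his)
    rw [this, Finset.card_compl, hA]
    simp; omega
  have hle : l[n-k]'(by omega) ≤ s := by
    by_contra hcon
    have := countP_le_of_sorted hl (m := n - k) (by omega) (not_le.1 hcon)
    omega
  have hgt : s < l[n-k+1]'(by omega) := by
    by_contra hcon
    have := countP_ge_of_sorted hl (m := n - k + 1) (by omega) (not_lt.1 hcon)
    omega
  have hgetD1 : l.getD (n-k) 0 = l[n-k]'(by omega) := List.getD_eq_getElem l 0 (by omega)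
  have hgetD2 : l.getD (n-k+1) 0 = l[n-k+1]'(by omega) := List.getD_eq_getElem l 0 (by omega)
  refine ⟨?_, by rw [hgetD2]; exact hgt⟩
  rw [hgetD1]
  apply le_antisymm
  · have hmem : l[n-k]'(by omega) ∈ l := List.getElem_mem _
    have : l[n-k]'(by omega) ∈ List.ofFn v := hperm.mem_iff.1 hmem
    obtain ⟨j, hj⟩ := (List.mem_ofFn.1 this)
    rw [← hj]
    have hjA : j ∉ A := fun hjA => absurd (hAs j hjA) (not_lt.2 (hj ▸ hle))
    by_cases hji : j = i
    · subst hji; exact le_refl _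
    · exact le_of_lt (hlt j hjA hji)
  · have hmem : v i ∈ l := hperm.mem_iff.2 (List.mem_ofFn.2 ⟨i, rfl⟩)
    exact le_nk_of_le hk2 hkn hmem his hgt

include hk2 hkn in
lemma lemB {v : Fin n → ℝ} {s : ℝ} (hinj : Function.Injective v)
    (h1 : s < ((List.ofFn v).mergeSort (fun x y => decide (x ≤ y))).getD (n - k + 1) 0)
    (h2 : ((List.ofFn v).mergeSort (fun x y => decide (x ≤ y))).getD (n - k) 0 ≤ s) :
    ∃ (A : Finset (Fin n)) (i : Fin n), A.card = k - 1 ∧ i ∉ A ∧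
      (∀ j ∈ A, s < v j) ∧ (∀ j, j ∉ A → j ≠ i → v j < v i) ∧
      v i = ((List.ofFn v).mergeSort (fun x y => decide (x ≤ y))).getD (n - k) 0 := by
  set l := (List.ofFn v).mergeSort (fun x y => decide (x ≤ y)) with hldef
  have hlen : l.length = n := by rw [hldef, List.length_mergeSort, List.length_ofFn]
  have hl : l.Pairwise (· ≤ ·) := sorted_ms _
  have hperm : l.Perm (List.ofFn v) := List.mergeSort_perm _ _
  have hnk : n - k < n := by omega
  have hnk1 : n - k + 1 < n := by omega
  have hgetD1 : l.getD (n-k) 0 = l[n-k]'(by omega) := List.getD_eq_getElem l 0 (by omega)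
  have hgetD2 : l.getD (n-k+1) 0 = l[n-k+1]'(by omega) := List.getD_eq_getElem l 0 (by omega)
  rw [hgetD1] at h2
  rw [hgetD2] at h1
  have hcount : l.countP (fun x => decide (x ≤ s)) = n - k + 1 := by
    have hge := countP_ge_of_sorted hl (m := n - k) (by omega) h2
    have hle := countP_le_of_sorted hl (m := n - k + 1) (by omega) h1
    omega
  have hmem : l[n-k]'(by omega) ∈ List.ofFn v :=
    hperm.mem_iff.1 (List.getElem_mem _)
  obtain ⟨i, hi⟩ := (List.mem_ofFn.1 hmem)
  refine ⟨Finset.univ.filter (fun j => s < v j), i, ?_, ?_, ?_, ?_, by rw [hgetD1, hi]⟩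
  · have hc : (Finset.univ.filter (fun j => decide (v j ≤ s) = true)).card = n - k + 1 := by
      rw [← countP_ofFn v (fun x => decide (x ≤ s)), ← hperm.countP_eq, hcount]
    have : Finset.univ.filter (fun j => s < v j)
        = (Finset.univ.filter (fun j => decide (v j ≤ s) = true))ᶜ := by
      ext j; simp [not_le]
    rw [this, Finset.card_compl, hc]
    simp; omega
  · simp only [Finset.mem_filter, Finset.mem_univ, true_and, not_lt]
    exact le_of_eq_of_le hi h2
  · intro j hj; simpa using (Finset.mem_filter.1 hj).2
  · intro j hj hji
    simp only [Finset.mem_filter, Finset.mem_univ, true_and, not_lt] at hj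
    have hjm : v j ∈ l := hperm.mem_iff.2 (List.mem_ofFn.2 ⟨j, rfl⟩)
    have := le_nk_of_le hk2 hkn hjm hj h1
    rw [← hi] at this
    exact lt_of_le_of_ne this (fun hcon => hji (hinj hcon))

end ListLemmas

section MeasureLemmas
open MeasureTheory

lemma vol_noninj (n : ℕ) :
    (volume : Measure ((Fin n → ℝ) × ℝ)) {p | ¬ Function.Injective p.1} = 0 := by
  have hS : (volume : Measure (Fin n → ℝ)) {x | ¬ Function.Injective x} = 0 := by
    have hsub : {x : Fin n → ℝ | ¬ Function.Injective x} ⊆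
        ⋃ q : Fin n × Fin n, {x | q.1 ≠ q.2 ∧ x q.1 = x q.2} := by
      intro x hx
      simp only [Set.mem_setOf_eq, Function.Injective, not_forall] at hx
      obtain ⟨i, j, hij, hne⟩ := hx
      exact Set.mem_iUnion.2 ⟨(i, j), hne, hij⟩
    refine measure_mono_null hsub (measure_iUnion_null fun q => ?_)
    by_cases hq : q.1 = q.2
    · have : {x : Fin n → ℝ | q.1 ≠ q.2 ∧ x q.1 = x q.2} = ∅ := by
        ext x; simp [hq]
      simp [this]
    · set φ : (Fin n → ℝ) →ₗ[ℝ] ℝ := (LinearMap.proj q.1 : (Fin n → ℝ) →ₗ[ℝ] ℝ)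
        - (LinearMap.proj q.2 : (Fin n → ℝ) →ₗ[ℝ] ℝ) with hφ
      have hsub2 : {x : Fin n → ℝ | q.1 ≠ q.2 ∧ x q.1 = x q.2}
          ⊆ (LinearMap.ker φ : Set (Fin n → ℝ)) := by
        intro x hx
        simp only [Set.mem_setOf_eq] at hx
        simp [hφ, LinearMap.mem_ker, sub_eq_zero, hx.2]
      refine measure_mono_null hsub2 (Measure.addHaar_submodule _ _ ?_)
      intro htop
      have hmem : (Pi.single q.1 1 : Fin n → ℝ) ∈ LinearMap.ker φ :=
        Submodule.eq_top_iff'.1 htop _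
      simp [hφ, LinearMap.mem_ker, Pi.single_apply, hq, Ne.symm hq] at hmem
  have hle : (volume : Measure ((Fin n → ℝ) × ℝ)) {p | ¬ Function.Injective p.1}
      ≤ (volume : Measure ((Fin n → ℝ) × ℝ))
        ({x | ¬ Function.Injective x} ×ˢ (Set.univ : Set ℝ)) := by
    apply measure_mono; intro p hp; exact ⟨hp, trivial⟩
  have h0 : (volume : Measure ((Fin n → ℝ) × ℝ))
      ({x | ¬ Function.Injective x} ×ˢ (Set.univ : Set ℝ)) = 0 := by
    rw [Measure.volume_eq_prod, Measure.prod_prod, hS, zero_mul]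
  exact le_antisymm (h0 ▸ hle) zero_le

lemma exchange {n : ℕ} (h : (Fin n → ℝ) → ℝ → ℝ)
    (hsymm : ∀ σ : Equiv.Perm (Fin n), ∀ z zl, h (z ∘ σ) zl = h z zl)
    (σ : Equiv.Perm (Fin n)) {B : Set ((Fin n → ℝ) × ℝ)} (hB : MeasurableSet B) :
    ((volume : Measure ((Fin n → ℝ) × ℝ)).withDensity (fun p => ENNReal.ofReal (h p.1 p.2)))
      ((fun p : (Fin n → ℝ) × ℝ => (p.1 ∘ σ, p.2)) ⁻¹' B)
    = ((volume : Measure ((Fin n → ℝ) × ℝ)).withDensity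
        (fun p => ENNReal.ofReal (h p.1 p.2))) B := by
  set f : (Fin n → ℝ) × ℝ → ENNReal := fun p => ENNReal.ofReal (h p.1 p.2) with hf
  set e₁ : (Fin n → ℝ) ≃ᵐ (Fin n → ℝ) := MeasurableEquiv.piCongrLeft (fun _ => ℝ) σ.symm with he₁
  have he₁app : ∀ (x : Fin n → ℝ), e₁ x = x ∘ σ := by
    intro x; funext j
    have := MeasurableEquiv.piCongrLeft_apply_apply σ.symm (β := fun _ => ℝ) x (σ j)
    simpa using this
  set e : ((Fin n → ℝ) × ℝ) ≃ᵐ ((Fin n → ℝ) × ℝ) := e₁.prodCongr (MeasurableEquiv.refl ℝ) with he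
  have heapp : ∀ p : (Fin n → ℝ) × ℝ, e p = (p.1 ∘ σ, p.2) := by
    intro p
    show (e₁ p.1, p.2) = _
    rw [he₁app]
  have hmp : MeasurePreserving e volume volume := by
    have h1 : MeasurePreserving e₁ volume volume :=
      MeasureTheory.volume_measurePreserving_piCongrLeft (fun _ => ℝ) σ.symm
    have h2 : MeasurePreserving (Prod.map e₁ (id : ℝ → ℝ))
        (volume.prod volume) (volume.prod volume) := h1.prod (MeasurePreserving.id _)
    rw [Measure.volume_eq_prod]
    convert h2 using 1 <;> rfl
  have hfe : ∀ p, f (e p) = f p := by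
    intro p
    rw [heapp]
    simp only [hf]
    rw [hsymm σ p.1 p.2]
  have hEeq : (fun p : (Fin n → ℝ) × ℝ => (p.1 ∘ σ, p.2)) = ⇑e := by
    funext p; rw [heapp]
  rw [hEeq]
  rw [withDensity_apply _ (e.measurable hB), withDensity_apply _ hB]
  have := hmp.setLIntegral_comp_preimage_emb e.measurableEmbedding f B
  rw [← this]
  exact lintegral_congr fun x => (hfe x).symm

end MeasureLemmas

section PermLemmas

lemma subtypeCongr_apply_pos {α} {p q : α → Prop} [DecidablePred p] [DecidablePred q]
    (e : { x // p x } ≃ { x // q x }) (f : { x // ¬p x } ≃ { x // ¬q x }) (a : α) (h : p a) :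
    Equiv.subtypeCongr e f a = (e ⟨a, h⟩ : α) := by
  simp [Equiv.subtypeCongr, h]

lemma subtypeCongr_apply_neg {α} {p q : α → Prop} [DecidablePred p] [DecidablePred q]
    (e : { x // p x } ≃ { x // q x }) (f : { x // ¬p x } ≃ { x // ¬q x }) (a : α) (h : ¬ p a) :
    Equiv.subtypeCongr e f a = (f ⟨a, h⟩ : α) := by
  simp [Equiv.subtypeCongr, h]

lemma card_lt_filter (n m : ℕ) (hmn : m ≤ n) :
    (Finset.univ.filter (fun j : Fin n => (j : ℕ) < m)).card = m := by
  have : Finset.univ.filter (fun j : Fin n => (j : ℕ) < m)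
      = (Finset.univ : Finset (Fin m)).map (Fin.castLEEmb hmn) := by
    ext j
    simp only [Finset.mem_filter, Finset.mem_univ, true_and, Finset.mem_map]
    constructor
    · intro hj
      exact ⟨⟨(j : ℕ), hj⟩, by simp [Fin.castLEEmb, Fin.ext_iff]⟩
    · rintro ⟨x, rfl⟩
      simp [Fin.castLEEmb]
  rw [this, Finset.card_map]
  simp

lemma exists_perm {n k : ℕ} (hn : 2 ≤ n) (hk2 : 2 ≤ k) (hkn : k ≤ n)
    (A : Finset (Fin n)) (i : Fin n) (hA : A.card = k - 1) (hi : i ∉ A) :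
    ∃ σ : Equiv.Perm (Fin n), (∀ j, σ j ∈ A ↔ (j : ℕ) < k - 1) ∧ σ ⟨n-1, by omega⟩ = i := by
  classical
  set A₀ : Finset (Fin n) := Finset.univ.filter (fun j => (j : ℕ) < k - 1) with hA₀
  have hA₀card : A₀.card = k - 1 := card_lt_filter n (k-1) (by omega)
  have hcards : A₀.card = A.card := by rw [hA₀card, hA]
  set e : {x // x ∈ A₀} ≃ {x // x ∈ A} := Finset.equivOfCardEq hcards with he
  have hccard : A₀ᶜ.card = Aᶜ.card := by
    rw [Finset.card_compl, Finset.card_compl, hA₀card, hA]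
  have g : {x // ¬ x ∈ A₀} ≃ {x // ¬ x ∈ A} :=
    (Equiv.subtypeEquivRight (fun x => (Finset.mem_compl (s := A₀)).symm)).trans
      ((Finset.equivOfCardEq hccard).trans (Equiv.subtypeEquivRight (fun x => Finset.mem_compl)))
  have hn1 : ¬ ((⟨n-1, by omega⟩ : Fin n) ∈ A₀) := by
    simp [hA₀]; omega
  set x₀ : {x // ¬ x ∈ A₀} := ⟨⟨n-1, by omega⟩, hn1⟩ with hx₀
  set y₀ : {x // ¬ x ∈ A} := ⟨i, hi⟩ with hy₀
  set f : {x // ¬ x ∈ A₀} ≃ {x // ¬ x ∈ A} := g.trans (Equiv.swap (g x₀) y₀) with hfd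
  refine ⟨Equiv.subtypeCongr e f, ?_, ?_⟩
  · intro j
    by_cases hj : j ∈ A₀
    · rw [subtypeCongr_apply_pos e f j hj]
      have : (e ⟨j, hj⟩ : Fin n) ∈ A := (e ⟨j, hj⟩).2
      simp only [this, true_iff]
      simpa [hA₀] using hj
    · rw [subtypeCongr_apply_neg e f j hj]
      have : ¬ ((f ⟨j, hj⟩ : Fin n) ∈ A) := (f ⟨j, hj⟩).2
      simp only [this, false_iff]
      simpa [hA₀] using hj
  · rw [subtypeCongr_apply_neg e f _ hn1]
    have : f x₀ = y₀ := by
      rw [hfd]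
      simp [Equiv.swap_apply_left]
    rw [show (⟨(⟨n-1, by omega⟩ : Fin n), hn1⟩ : {x // ¬ x ∈ A₀}) = x₀ from rfl, this]

end PermLemmas

theorem joint_prob_reduction_cold_standby
    {Ω : Type*} [MeasurableSpace Ω] (P : Measure Ω) [IsProbabilityMeasure P]
    (n k : ℕ) (hn : 2 ≤ n) (hk2 : 2 ≤ k) (hkn : k ≤ n)
    (Z : Fin n → Ω → ℝ) (Zc : Ω → ℝ)
    (hZm : ∀ i, Measurable (Z i)) (hZcm : Measurable Zc)
    (hZ0 : ∀ i ω, 0 ≤ Z i ω) (hZc0 : ∀ ω, 0 ≤ Zc ω)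
    (h : (Fin n → ℝ) → ℝ → ℝ)
    (hsymm : ∀ σ : Equiv.Perm (Fin n), ∀ z zl, h (z ∘ σ) zl = h z zl)
    (hdens : Measure.map (fun ω => ((fun i => Z i ω), Zc ω)) P
      = (volume : Measure ((Fin n → ℝ) × ℝ)).withDensity
          (fun p => ENNReal.ofReal (h p.1 p.2)))
    (T : Ω → ℝ)
    (hT : ∀ ω, T ω = orderStat Z (n - k + 1) ω
      + min (orderStat Z (n - k + 2) ω - orderStat Z (n - k + 1) ω) (Zc ω))
    (t s : ℝ) (ht : 0 ≤ t) (hts : t ≤ s) :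
    (P {ω | s < T ω ∧ t ≤ orderStat Z (n - k + 1) ω ∧ orderStat Z (n - k + 1) ω ≤ s}).toReal
      = (n : ℝ) * ((n - 1).choose (n - k)) *
        (P {ω | (∀ j : Fin n, (j : ℕ) < k - 1 → s < Z j ω)
            ∧ s < Z ⟨n - 1, by omega⟩ ω + Zc ω
            ∧ (∀ j : Fin n, k - 1 ≤ (j : ℕ) → (j : ℕ) < n - 1 → Z j ω < Z ⟨n - 1, by omega⟩ ω)
            ∧ t ≤ Z ⟨n - 1, by omega⟩ ω ∧ Z ⟨n - 1, by omega⟩ ω ≤ s}).toReal := by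
  classical
  set Φ : Ω → (Fin n → ℝ) × ℝ := fun ω => (fun i => Z i ω, Zc ω) with hΦdef
  have hΦ : Measurable Φ := (measurable_pi_lambda _ hZm).prodMk hZcm
  set Bs : Finset (Fin n) → Fin n → Set ((Fin n → ℝ) × ℝ) := fun A i =>
    {p | (∀ j ∈ A, s < p.1 j) ∧ s < p.1 i + p.2
      ∧ (∀ j, j ∉ A → j ≠ i → p.1 j < p.1 i) ∧ t ≤ p.1 i ∧ p.1 i ≤ s} with hBsdef
  have hbm : ∀ j : Fin n, Measurable (fun p : (Fin n → ℝ) × ℝ => p.1 j) :=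
    fun j => (measurable_pi_apply j).comp measurable_fst
  have hBmeas : ∀ (A : Finset (Fin n)) (i : Fin n), MeasurableSet (Bs A i) := by
    intro A i
    have h1 : MeasurableSet {p : (Fin n → ℝ) × ℝ | ∀ j ∈ A, s < p.1 j} := by
      rw [show {p : (Fin n → ℝ) × ℝ | ∀ j ∈ A, s < p.1 j}
          = ⋂ j ∈ A, {p : (Fin n → ℝ) × ℝ | s < p.1 j} by ext p; simp]
      exact MeasurableSet.biInter (Set.to_countable _)
        (fun j _ => measurableSet_lt measurable_const (hbm j))
    have h2 : MeasurableSet {p : (Fin n → ℝ) × ℝ | s < p.1 i + p.2} :=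
      measurableSet_lt measurable_const ((hbm i).add measurable_snd)
    have h3 : MeasurableSet {p : (Fin n → ℝ) × ℝ | ∀ j, j ∉ A → j ≠ i → p.1 j < p.1 i} := by
      rw [show {p : (Fin n → ℝ) × ℝ | ∀ j, j ∉ A → j ≠ i → p.1 j < p.1 i}
          = ⋂ j ∈ (Aᶜ.erase i), {p : (Fin n → ℝ) × ℝ | p.1 j < p.1 i} by
        ext p
        simp only [Set.mem_setOf_eq, Set.mem_iInter, Finset.mem_erase, Finset.mem_compl]
        constructor
        · rintro hp j ⟨hji, hjA⟩; exact hp j hjA hji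
        · intro hp j hjA hji; exact hp j ⟨hji, hjA⟩]
      exact MeasurableSet.biInter (Set.to_countable _)
        (fun j _ => measurableSet_lt (hbm j) (hbm i))
    have h4 : MeasurableSet {p : (Fin n → ℝ) × ℝ | t ≤ p.1 i} :=
      measurableSet_le measurable_const (hbm i)
    have h5 : MeasurableSet {p : (Fin n → ℝ) × ℝ | p.1 i ≤ s} :=
      measurableSet_le (hbm i) measurable_const
    exact h1.inter (h2.inter (h3.inter (h4.inter h5)))
  set A₀ : Finset (Fin n) := Finset.univ.filter (fun j : Fin n => (j : ℕ) < k - 1) with hA₀def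
  set i₀ : Fin n := ⟨n - 1, by omega⟩ with hi₀def
  -- RHS event is preimage of Bs A₀ i₀
  have hRHS : {ω | (∀ j : Fin n, (j : ℕ) < k - 1 → s < Z j ω)
      ∧ s < Z ⟨n - 1, by omega⟩ ω + Zc ω
      ∧ (∀ j : Fin n, k - 1 ≤ (j : ℕ) → (j : ℕ) < n - 1 → Z j ω < Z ⟨n - 1, by omega⟩ ω)
      ∧ t ≤ Z ⟨n - 1, by omega⟩ ω ∧ Z ⟨n - 1, by omega⟩ ω ≤ s}
      = Φ ⁻¹' (Bs A₀ i₀) := by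
    ext ω
    simp only [Set.mem_setOf_eq, Set.mem_preimage, hBsdef, hΦdef, hA₀def, hi₀def,
      Finset.mem_filter, Finset.mem_univ, true_and]
    constructor
    · rintro ⟨c1, c2, c3, c4, c5⟩
      refine ⟨fun j hj => c1 j hj, c2, fun j hj hji => ?_, c4, c5⟩
      have hjn : (j : ℕ) < n := j.2
      have : (j : ℕ) ≠ n - 1 := fun hc => hji (Fin.ext hc)
      exact c3 j (by omega) (by omega)
    · rintro ⟨c1, c2, c3, c4, c5⟩
      refine ⟨fun j hj => c1 j hj, c2, fun j hj1 hj2 => ?_, c4, c5⟩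
      refine c3 j (by omega) ?_
      intro hc
      have := congrArg Fin.val hc
      simp only [hi₀def] at this
      omega
  -- μ
  have hμ : ∀ {B : Set ((Fin n → ℝ) × ℝ)}, MeasurableSet B →
      P (Φ ⁻¹' B) = (Measure.map Φ P) B := by
    intro B hB
    rw [Measure.map_apply hΦ hB]
  -- exchange
  have hexch : ∀ (A : Finset (Fin n)) (i : Fin n), A.card = k - 1 → i ∉ A →
      P (Φ ⁻¹' (Bs A i)) = P (Φ ⁻¹' (Bs A₀ i₀)) := by
    intro A i hA hi
    obtain ⟨σ, hσA, hσi⟩ := exists_perm hn hk2 hkn A i hA hi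
    rw [← hi₀def] at hσi
    have hset : Bs A i = (fun p : (Fin n → ℝ) × ℝ => (p.1 ∘ σ, p.2)) ⁻¹' (Bs A₀ i₀) := by
      ext p
      simp only [hBsdef, Set.mem_preimage, Set.mem_setOf_eq, Function.comp_apply, hσi]
      have hA₀mem : ∀ j : Fin n, j ∈ A₀ ↔ (j : ℕ) < k - 1 := by
        intro j; simp [hA₀def]
      constructor
      · rintro ⟨c1, c2, c3, c4, c5⟩
        refine ⟨fun j hj => c1 _ ((hσA j).2 ((hA₀mem j).1 hj)), c2, ?_, c4, c5⟩
        intro j hj hji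
        refine c3 (σ j) (fun hc => hj ((hA₀mem j).2 ((hσA j).1 hc))) ?_
        intro hc
        rw [← hσi] at hc
        exact hji (σ.injective hc)
      · rintro ⟨c1, c2, c3, c4, c5⟩
        refine ⟨?_, c2, ?_, c4, c5⟩
        · intro j hj
          have h1 : σ (σ.symm j) = j := σ.apply_symm_apply j
          have hA' : σ (σ.symm j) ∈ A := by rw [h1]; exact hj
          have hmem : σ.symm j ∈ A₀ := (hA₀mem _).2 ((hσA _).1 hA')
          have := c1 _ hmem
          rwa [h1] at this
        · intro j hj hji
          have h1 : σ (σ.symm j) = j := σ.apply_symm_apply j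
          have hnot : σ.symm j ∉ A₀ := by
            intro hc
            have : σ (σ.symm j) ∈ A := (hσA _).2 ((hA₀mem _).1 hc)
            rw [h1] at this
            exact hj this
          have hne : σ.symm j ≠ i₀ := by
            intro hc
            apply hji
            rw [← h1, hc, hσi]
          have := c3 _ hnot hne
          rwa [h1] at this
    rw [hμ (hBmeas A i), hμ (hBmeas A₀ i₀), hdens, hset]
    exact exchange h hsymm σ (hBmeas A₀ i₀)
  -- order statistics unfold
  have horder1 : ∀ ω, orderStat Z (n-k+1) ω
      = ((List.ofFn (fun i => Z i ω)).mergeSort (fun x y => decide (x ≤ y))).getD (n-k) 0 :=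
    fun ω => rfl
  have horder2 : ∀ ω, orderStat Z (n-k+2) ω
      = ((List.ofFn (fun i => Z i ω)).mergeSort (fun x y => decide (x ≤ y))).getD (n-k+1) 0 :=
    fun ω => rfl
  -- event rewriting via min algebra
  have hEv : {ω | s < T ω ∧ t ≤ orderStat Z (n-k+1) ω ∧ orderStat Z (n-k+1) ω ≤ s}
      = {ω | s < orderStat Z (n-k+2) ω ∧ s < orderStat Z (n-k+1) ω + Zc ω
          ∧ t ≤ orderStat Z (n-k+1) ω ∧ orderStat Z (n-k+1) ω ≤ s} := by
    ext ω
    have hmin : orderStat Z (n-k+1) ω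
        + min (orderStat Z (n-k+2) ω - orderStat Z (n-k+1) ω) (Zc ω)
        = min (orderStat Z (n-k+2) ω) (orderStat Z (n-k+1) ω + Zc ω) := by
      rw [← min_add_add_left]; congr 1; ring
    simp only [Set.mem_setOf_eq, hT ω, hmin, lt_min_iff]
    tauto
  set 𝒜 : Finset (Finset (Fin n)) := Finset.univ.powersetCard (k-1) with h𝒜def
  set U : Set Ω := ⋃ A ∈ 𝒜, ⋃ i ∈ Aᶜ, Φ ⁻¹' (Bs A i) with hUdef
  set E' : Set Ω := {ω | s < orderStat Z (n-k+2) ω ∧ s < orderStat Z (n-k+1) ω + Zc ω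
      ∧ t ≤ orderStat Z (n-k+1) ω ∧ orderStat Z (n-k+1) ω ≤ s} with hE'def
  -- U ⊆ E'
  have hUsubE : U ⊆ E' := by
    intro ω hω
    simp only [hUdef, Set.mem_iUnion, Set.mem_preimage] at hω
    obtain ⟨A, hA𝒜, i, hiC, hmem⟩ := hω
    have hAcard : A.card = k - 1 := (Finset.mem_powersetCard.1 hA𝒜).2
    have hiA : i ∉ A := Finset.mem_compl.1 hiC
    simp only [hBsdef, Set.mem_setOf_eq] at hmem
    obtain ⟨c1, c2, c3, c4, c5⟩ := hmem
    obtain ⟨heq, hgt⟩ := lemA hk2 hkn A i hAcard hiA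
      (v := fun j => Z j ω) c1 c3 c5
    refine ⟨?_, ?_, ?_, ?_⟩
    · rw [horder2 ω]; exact hgt
    · rw [horder1 ω, heq]; exact c2
    · rw [horder1 ω, heq]; exact c4
    · rw [horder1 ω, heq]; exact c5
  -- E' ⊆ U ∪ noninjective
  set N : Set Ω := Φ ⁻¹' {p : (Fin n → ℝ) × ℝ | ¬ Function.Injective p.1} with hNdef
  have hEsubU : E' ⊆ U ∪ N := by
    intro ω hω
    obtain ⟨d1, d2, d3, d4⟩ := hω
    by_cases hinj : Function.Injective (fun j => Z j ω)
    · left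
      rw [horder1 ω] at d2 d3 d4
      rw [horder2 ω] at d1
      obtain ⟨A, i, hAcard, hiA, hAs, hlt, hieq⟩ := lemB hk2 hkn hinj d1 d4
      simp only [hUdef, Set.mem_iUnion, Set.mem_preimage]
      refine ⟨A, Finset.mem_powersetCard.2 ⟨Finset.subset_univ _, hAcard⟩, i,
        Finset.mem_compl.2 hiA, ?_⟩
      simp only [hBsdef, Set.mem_setOf_eq]
      refine ⟨hAs, ?_, hlt, ?_, ?_⟩
      · rw [← hieq] at d2; exact d2
      · rw [← hieq] at d3; exact d3
      · rw [← hieq] at d4; exact d4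
    · right
      exact hinj
  -- null set
  have hNmeas : MeasurableSet {p : (Fin n → ℝ) × ℝ | ¬ Function.Injective p.1} := by
    have heq : {p : (Fin n → ℝ) × ℝ | ¬ Function.Injective p.1}
        = ⋃ (q : Fin n × Fin n), ⋃ (_ : q.1 ≠ q.2), {p : (Fin n → ℝ) × ℝ | p.1 q.1 = p.1 q.2} := by
      ext p
      simp only [Set.mem_setOf_eq, Set.mem_iUnion, Function.Injective, not_forall]
      constructor
      · rintro ⟨i, j, hij, hne⟩; exact ⟨(i, j), hne, hij⟩
      · rintro ⟨q, hne, hq⟩; exact ⟨q.1, q.2, hq, hne⟩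
    rw [heq]
    exact MeasurableSet.iUnion fun q => MeasurableSet.iUnion fun _ =>
      measurableSet_eq_fun (hbm q.1) (hbm q.2)
  have hNnull : P N = 0 := by
    rw [hNdef, hμ hNmeas, hdens]
    exact (withDensity_absolutelyContinuous _ _) (vol_noninj n)
  -- P E' = P U
  have hPE : P E' = P U := by
    apply le_antisymm
    · calc P E' ≤ P (U ∪ N) := measure_mono hEsubU
        _ ≤ P U + P N := measure_union_le _ _
        _ = P U := by rw [hNnull, add_zero]
    · exact measure_mono hUsubE
  -- disjointness and sum
  have hdetA : ∀ (A : Finset (Fin n)) (i : Fin n) (ω : Ω), ω ∈ Φ ⁻¹' (Bs A i) →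
      ∀ j, j ∈ A ↔ s < Z j ω := by
    intro A i ω hω j
    simp only [hBsdef, Set.mem_preimage, Set.mem_setOf_eq] at hω
    obtain ⟨c1, c2, c3, c4, c5⟩ := hω
    constructor
    · exact c1 j
    · intro hj
      by_contra hjA
      by_cases hji : j = i
      · subst hji; exact absurd c5 (not_le.2 hj)
      · exact absurd (lt_of_lt_of_le (c3 j hjA hji) c5) (not_lt.2 (le_of_lt hj))
  have hPU : P U = ∑ A ∈ 𝒜, ∑ i ∈ Aᶜ, P (Φ ⁻¹' (Bs A i)) := by
    rw [hUdef]
    rw [measure_biUnion_finset ?_ ?_]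
    · refine Finset.sum_congr rfl fun A hA => ?_
      rw [measure_biUnion_finset ?_ ?_]
      · intro i hi i' hi' hne
        simp only [Finset.coe_compl, Set.mem_compl_iff, Finset.mem_coe] at hi hi'
        refine Set.disjoint_left.2 fun ω hω hω' => ?_
        simp only [hBsdef, Set.mem_preimage, Set.mem_setOf_eq] at hω hω'
        have h1 : Z i' ω < Z i ω := hω.2.2.1 i' hi' hne.symm
        have h2 : Z i ω < Z i' ω := hω'.2.2.1 i hi hne
        exact absurd h1 (not_lt.2 (le_of_lt h2))
      · exact fun i _ => (hBmeas A i).preimage hΦ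
    · intro A hA A' hA' hne
      refine Set.disjoint_left.2 fun ω hω hω' => ?_
      simp only [Set.mem_iUnion] at hω hω'
      obtain ⟨i, hi, hmem⟩ := hω
      obtain ⟨i', hi', hmem'⟩ := hω'
      apply hne
      have := hdetA A i ω hmem
      have := hdetA A' i' ω hmem'
      ext j
      rw [hdetA A i ω hmem j, hdetA A' i' ω hmem' j]
    · intro A hA
      exact (Finset.measurableSet_biUnion _ fun i _ => (hBmeas A i).preimage hΦ)
  have hval : ∀ A ∈ 𝒜, ∀ i ∈ Aᶜ, P (Φ ⁻¹' (Bs A i)) = P (Φ ⁻¹' (Bs A₀ i₀)) := by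
    intro A hA i hi
    exact hexch A i (Finset.mem_powersetCard.1 hA).2 (Finset.mem_compl.1 hi)
  have hsum : ∑ A ∈ 𝒜, ∑ i ∈ Aᶜ, P (Φ ⁻¹' (Bs A i))
      = (𝒜.card * (n - (k-1))) • P (Φ ⁻¹' (Bs A₀ i₀)) := by
    have hstep : ∀ A ∈ 𝒜, ∑ i ∈ Aᶜ, P (Φ ⁻¹' (Bs A i))
        = (n - (k-1)) • P (Φ ⁻¹' (Bs A₀ i₀)) := by
      intro A hA
      rw [Finset.sum_congr rfl (fun i hi => hval A hA i hi), Finset.sum_const,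
        Finset.card_compl, Fintype.card_fin, (Finset.mem_powersetCard.1 hA).2]
    rw [Finset.sum_congr rfl hstep, Finset.sum_const, smul_smul]
  have h𝒜card : 𝒜.card = n.choose (k-1) := by
    rw [h𝒜def, Finset.card_powersetCard, Finset.card_univ, Fintype.card_fin]
  -- counting identity
  have hid : n.choose (k-1) * (n - (k-1)) = n * ((n-1).choose (n-k)) := by
    have e1 : (n-1).choose (n-k) = (n-1).choose (k-1) := by
      rw [show n - k = (n-1) - (k-1) by omega]
      exact Nat.choose_symm (by omega)
    have e2 := Nat.choose_succ_right_eq n (k-1)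
    have e3 := Nat.add_one_mul_choose_eq (n-1) (k-1)
    rw [show k - 1 + 1 = k by omega] at e2 e3
    rw [show n - 1 + 1 = n by omega] at e3
    rw [e1, ← e2, e3]
  -- finish
  rw [hEv, hRHS, hPE, hPU, hsum, h𝒜card, hid, nsmul_eq_mul, ENNReal.toReal_mul]
  rw [show ((((n * ((n-1).choose (n-k)) : ℕ)) : ENNReal)).toReal
    = (((n * ((n-1).choose (n-k)) : ℕ)) : ℝ) from rfl]
  push_cast
  ring
end

section
/- Let n ≥ 1, 1 ≤ k ≤ n, and let Z_1,…,Z_n be independent identically distributed integrable nonnegative random variables with cumulative distribution function F, and write F̄ = 1 − F. Let t ≥ 0 with F̄(t) > 0. Then E(Z_{n-k+1:n} − t | Z_{1:n} > t) = Σ_{m=0}^{n−k} Σ_{i=0}^{m} C(n,m) C(m,i) (−1)^i (∫_t^∞ F̄(z)^{n−m+i} dz) / F̄(t)^{n−m+i}. -/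
open MeasureTheory ProbabilityTheory

section Aux

lemma sorted_getD_lt_iff {l : List ℝ} (hl : l.Pairwise (· ≤ ·)) {j : ℕ} (hj : j < l.length) (z : ℝ) :
    z < l.getD j 0 ↔ l.countP (fun x => decide (x ≤ z)) ≤ j := by
  rw [List.getD_eq_getElem l 0 hj]
  rw [List.pairwise_iff_get] at hl
  have mono : ∀ (a b : ℕ) (ha : a < l.length) (hb : b < l.length), a ≤ b → l[a] ≤ l[b] := by
    intro a b ha hb hab
    rcases eq_or_lt_of_le hab with rfl | hlt
    · exact le_refl _
    · exact hl ⟨a, ha⟩ ⟨b, hb⟩ hlt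
  constructor
  · intro h
    have := List.take_append_drop j l
    rw [← this, List.countP_append]
    have h2 : List.countP (fun x => decide (x ≤ z)) (l.drop j) = 0 := by
      rw [List.countP_eq_zero]
      intro a ha
      rw [List.mem_iff_getElem] at ha
      obtain ⟨i, hi, rfl⟩ := ha
      rw [List.getElem_drop]
      simp only [decide_eq_true_eq, not_le]
      have hlen : j + i < l.length := by rw [List.length_drop] at hi; omega
      calc z < l[j] := h
        _ ≤ l[j + i] := mono _ _ hj hlen (by omega)
    rw [h2, Nat.add_zero]
    calc List.countP _ (l.take j) ≤ (l.take j).length := List.countP_le_length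
      _ ≤ j := by simp
  · intro h
    by_contra hc
    push_neg at hc
    have : j + 1 ≤ List.countP (fun x => decide (x ≤ z)) l := by
      have hsplit := List.take_append_drop (j+1) l
      conv_rhs => rw [← hsplit]
      rw [List.countP_append]
      have h1 : List.countP (fun x => decide (x ≤ z)) (l.take (j+1)) = j + 1 := by
        rw [List.countP_eq_length_filter, List.length_filter_eq_length_iff.mpr, List.length_take]
        · omega
        · intro a ha
          rw [List.mem_iff_getElem] at ha
          obtain ⟨i, hi, rfl⟩ := ha
          rw [List.getElem_take]
          simp only [decide_eq_true_eq]
          have hi' : i ≤ j := by rw [List.length_take] at hi; omega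
          exact le_trans (mono i j (by omega) hj hi') hc
      omega
    omega

lemma countP_eq_sum_map {α : Type*} (q : α → Bool) (l : List α) :
    l.countP q = (l.map (fun a => if q a then 1 else 0)).sum := by
  induction l with
  | nil => simp
  | cons a l ih =>
    rw [List.countP_cons, List.map_cons, List.sum_cons, ih]
    by_cases h : q a <;> simp [h, Nat.add_comm]

lemma countP_ofFn_s7 {n : ℕ} (f : Fin n → ℝ) (z : ℝ) :
    List.countP (fun x => decide (x ≤ z)) (List.ofFn f)
      = (Finset.univ.filter (fun i => f i ≤ z)).card := by
  rw [List.ofFn_eq_map, List.countP_map, Finset.card_filter, countP_eq_sum_map, Fin.sum_univ_def]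
  congr 1
  apply List.map_congr_left
  intro i _
  simp

lemma mergeSort_sorted {n : ℕ} (f : Fin n → ℝ) :
    ((List.ofFn f).mergeSort (fun x y => x ≤ y)).Pairwise (· ≤ ·) := by
  have := List.pairwise_mergeSort (le := fun x y : ℝ => decide (x ≤ y))
    (fun a b c hab hbc => by simp_all; linarith)
    (fun a b => by simp [le_total]) (List.ofFn f)
  exact this.imp (fun h => by simpa using h)

lemma mergeSort_length {n : ℕ} (f : Fin n → ℝ) :
    ((List.ofFn f).mergeSort (fun x y => x ≤ y)).length = n := by
  rw [(List.mergeSort_perm (List.ofFn f) _).length_eq, List.length_ofFn]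

lemma orderStat_lt_iff {Ω : Type*} {n : ℕ} (Z : Fin n → Ω → ℝ) {j : ℕ} (hj1 : 1 ≤ j) (hjn : j ≤ n)
    (z : ℝ) (ω : Ω) :
    z < orderStat Z j ω ↔ (Finset.univ.filter (fun i => Z i ω ≤ z)).card ≤ j - 1 := by
  unfold orderStat
  rw [sorted_getD_lt_iff (mergeSort_sorted _) (by rw [mergeSort_length]; omega) z,
    (List.mergeSort_perm _ _).countP_eq, countP_ofFn_s7]

lemma orderStat_mem {Ω : Type*} {n : ℕ} (Z : Fin n → Ω → ℝ) {j : ℕ} (hj1 : 1 ≤ j) (hjn : j ≤ n)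
    (ω : Ω) : ∃ i, orderStat Z j ω = Z i ω := by
  unfold orderStat
  rw [List.getD_eq_getElem _ 0 (by rw [mergeSort_length]; omega)]
  have hmem := List.getElem_mem (l := (List.ofFn fun i => Z i ω).mergeSort (fun x y => x ≤ y))
    (n := j - 1) (by rw [mergeSort_length]; omega)
  rw [(List.mergeSort_perm _ _).mem_iff, List.mem_ofFn] at hmem
  obtain ⟨i, hi⟩ := hmem
  exact ⟨i, hi.symm⟩

lemma orderStat_one_le {Ω : Type*} {n : ℕ} (Z : Fin n → Ω → ℝ) {j : ℕ} (hj1 : 1 ≤ j) (hjn : j ≤ n)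
    (ω : Ω) : orderStat Z 1 ω ≤ orderStat Z j ω := by
  unfold orderStat
  have hlen := mergeSort_length (fun i => Z i ω)
  rw [List.getD_eq_getElem _ 0 (by omega), List.getD_eq_getElem _ 0 (by omega)]
  have hl := (mergeSort_sorted (fun i => Z i ω))
  rw [List.pairwise_iff_get] at hl
  rcases Nat.eq_or_lt_of_le (Nat.zero_le (j - 1)) with he | hlt
  · exact le_of_eq (by congr 1 <;> omega)
  · exact hl ⟨1 - 1, by omega⟩ ⟨j - 1, by omega⟩ (by simpa using hlt)

lemma measurable_orderStat {Ω : Type*} [MeasurableSpace Ω] {n : ℕ} {Z : Fin n → Ω → ℝ}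
    (hZm : ∀ i, Measurable (Z i)) {j : ℕ} (hj1 : 1 ≤ j) (hjn : j ≤ n) :
    Measurable (orderStat Z j) := by
  apply measurable_of_Ioi
  intro z
  have hset : orderStat Z j ⁻¹' Set.Ioi z
      = {ω | (Finset.univ.filter (fun i => Z i ω ≤ z)).card ≤ j - 1} := by
    ext ω
    simpa using orderStat_lt_iff Z hj1 hjn z ω
  rw [hset]
  have hc : Measurable fun ω => (Finset.univ.filter (fun i => Z i ω ≤ z)).card := by
    simp_rw [Finset.card_filter]
    exact Finset.measurable_sum _ fun i _ =>
      Measurable.ite ((hZm i) measurableSet_Iic) measurable_const measurable_const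
  exact hc measurableSet_Iic

end Aux

theorem mrl_order_statistic_given_min_iid
    {Ω : Type*} [MeasurableSpace Ω] (P : Measure Ω) [IsProbabilityMeasure P]
    (n k : ℕ) (hn : 1 ≤ n) (hk1 : 1 ≤ k) (hkn : k ≤ n)
    (Z : Fin n → Ω → ℝ) (hZm : ∀ i, Measurable (Z i))
    (hZint : ∀ i, Integrable (Z i) P)
    (hZ0 : ∀ i ω, 0 ≤ Z i ω)
    (hindep : iIndepFun Z P)
    (F : ℝ → ℝ)
    (hFcdf : ∀ i x, (P {ω | Z i ω ≤ x}).toReal = F x)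
    (t : ℝ) (ht : 0 ≤ t) (hFt : 0 < 1 - F t) :
    (∫ ω in {ω | t < orderStat Z 1 ω}, (orderStat Z (n - k + 1) ω - t) ∂P)
        / (P {ω | t < orderStat Z 1 ω}).toReal
      = ∑ m ∈ Finset.range (n - k + 1), ∑ i ∈ Finset.range (m + 1),
          (n.choose m : ℝ) * (m.choose i) * (-1 : ℝ) ^ i *
            (∫ z in Set.Ioi t, (1 - F z) ^ (n - m + i)) / (1 - F t) ^ (n - m + i) := by
  classical
  set G : ℝ → ℝ := fun x => 1 - F x with hG
  -- basic facts about F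
  have hIic : ∀ (i : Fin n) (x : ℝ), (P (Z i ⁻¹' Set.Iic x)).toReal = F x := by
    intro i x
    exact hFcdf i x
  have hIoi : ∀ (i : Fin n) (x : ℝ), (P (Z i ⁻¹' Set.Ioi x)).toReal = 1 - F x := by
    intro i x
    have hpre : Z i ⁻¹' Set.Ioi x = (Z i ⁻¹' Set.Iic x)ᶜ := by
      ext ω; simp [not_le]
    rw [hpre, prob_compl_eq_one_sub ((hZm i) measurableSet_Iic),
      ENNReal.toReal_sub_of_le prob_le_one ENNReal.one_ne_top, ENNReal.toReal_one, hIic]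
  have hIoc : ∀ (i : Fin n) (a b : ℝ), a ≤ b →
      (P (Z i ⁻¹' Set.Ioc a b)).toReal = F b - F a := by
    intro i a b hab
    have hpre : Z i ⁻¹' Set.Ioc a b = Z i ⁻¹' Set.Iic b \ Z i ⁻¹' Set.Iic a := by
      ext ω; simp only [Set.mem_preimage, Set.mem_Ioc, Set.mem_diff, Set.mem_Iic, not_le]; exact and_comm
    rw [hpre, measure_diff (Set.preimage_mono (Set.Iic_subset_Iic.mpr hab))
      ((hZm i) measurableSet_Iic).nullMeasurableSet (measure_ne_top P _),
      ENNReal.toReal_sub_of_le (measure_mono (Set.preimage_mono (Set.Iic_subset_Iic.mpr hab)))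
      (measure_ne_top P _), hIic, hIic]
  have hF0 : ∀ x, 0 ≤ F x := fun x => (hFcdf ⟨0, hn⟩ x) ▸ ENNReal.toReal_nonneg
  have hF1 : ∀ x, F x ≤ 1 := by
    intro x
    rw [← hFcdf ⟨0, hn⟩ x]
    exact ENNReal.toReal_le_of_le_ofReal one_pos.le (by simpa using prob_le_one)
  have hFmono : Monotone F := by
    intro a b hab
    rw [← hFcdf ⟨0, hn⟩ a, ← hFcdf ⟨0, hn⟩ b]
    exact ENNReal.toReal_mono (measure_ne_top P _)
      (measure_mono (fun ω h => le_trans h hab))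
  -- the conditioning event
  have hAeq : {ω | t < orderStat Z 1 ω} = ⋂ i, Z i ⁻¹' Set.Ioi t := by
    ext ω
    rw [Set.mem_setOf_eq, orderStat_lt_iff Z le_rfl hn t ω]
    simp only [Nat.sub_self, Nat.le_zero, Finset.card_eq_zero, Finset.filter_eq_empty_iff,
      Set.mem_iInter, Set.mem_preimage, Set.mem_Ioi, not_le]
    simp
  have hAm : MeasurableSet {ω | t < orderStat Z 1 ω} := by
    rw [hAeq]
    exact MeasurableSet.iInter fun i => (hZm i) measurableSet_Ioi
  have hPA : (P {ω | t < orderStat Z 1 ω}).toReal = (1 - F t) ^ n := by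
    rw [hAeq, hindep.meas_iInter (fun i => ⟨Set.Ioi t, measurableSet_Ioi, rfl⟩),
      ENNReal.toReal_prod]
    simp_rw [hIoi]
    rw [Finset.prod_const, Finset.card_univ, Fintype.card_fin]
  -- the key probability computation
  have hkey : ∀ z : ℝ, t < z →
      (P ({ω | z < orderStat Z (n - k + 1) ω} ∩ ⋂ i, Z i ⁻¹' Set.Ioi t)).toReal
        = ∑ m ∈ Finset.range (n - k + 1),
            (n.choose m : ℝ) * ((F z - F t) ^ m * (1 - F z) ^ (n - m)) := by
    intro z hz
    have hBmeas : ∀ (S : Finset (Fin n)) (i : Fin n),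
        MeasurableSet (if i ∈ S then Set.Ioc t z else Set.Ioi z) := by
      intro S i
      split_ifs
      · exact measurableSet_Ioc
      · exact measurableSet_Ioi
    have hset : {ω | z < orderStat Z (n - k + 1) ω} ∩ ⋂ i, Z i ⁻¹' Set.Ioi t
        = ⋃ S ∈ (Finset.range (n - k + 1)).biUnion
            (fun m => Finset.powersetCard m (Finset.univ : Finset (Fin n))),
          ⋂ i, Z i ⁻¹' (if i ∈ S then Set.Ioc t z else Set.Ioi z) := by
      ext ω
      simp only [Set.mem_inter_iff, Set.mem_setOf_eq, Set.mem_iInter, Set.mem_preimage,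
        Set.mem_Ioi, Set.mem_iUnion, Finset.mem_biUnion, Finset.mem_range,
        Finset.mem_powersetCard]
      constructor
      · rintro ⟨h1, h2⟩
        rw [orderStat_lt_iff Z (by omega) (by omega) z ω] at h1
        have h1' : (Finset.univ.filter (fun i => Z i ω ≤ z)).card ≤ n - k := by omega
        refine ⟨Finset.univ.filter (fun i => Z i ω ≤ z),
          ⟨(Finset.univ.filter (fun i => Z i ω ≤ z)).card, by omega,
            Finset.subset_univ _, rfl⟩, ?_⟩
        intro i
        by_cases hi : Z i ω ≤ z
        · simp only [Finset.mem_filter, Finset.mem_univ, true_and, hi, if_true]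
          exact ⟨h2 i, hi⟩
        · simp only [Finset.mem_filter, Finset.mem_univ, true_and, hi, if_false]
          exact lt_of_not_ge hi
      · rintro ⟨S, ⟨m, hm, _, hcard⟩, hmem⟩
        have h2 : ∀ i, t < Z i ω := by
          intro i
          have := hmem i
          split_ifs at this with hi
          · exact this.1
          · exact lt_trans hz this
        refine ⟨?_, h2⟩
        rw [orderStat_lt_iff Z (by omega) (by omega) z ω]
        have hsub : Finset.univ.filter (fun i => Z i ω ≤ z) ⊆ S := by
          intro i hi
          rw [Finset.mem_filter] at hi
          by_contra hiS
          have := hmem i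
          rw [if_neg hiS] at this
          exact absurd hi.2 (not_le.mpr this)
        have := Finset.card_le_card hsub
        omega
    have hdisj : (↑((Finset.range (n - k + 1)).biUnion
          (fun m => Finset.powersetCard m (Finset.univ : Finset (Fin n)))) : Set (Finset (Fin n))).PairwiseDisjoint
        (fun S => ⋂ i, Z i ⁻¹' (if i ∈ S then Set.Ioc t z else Set.Ioi z)) := by
      intro S _ T _ hST
      refine Set.disjoint_left.mpr fun ω hωS hωT => hST ?_
      simp only [Set.mem_iInter, Set.mem_preimage] at hωS hωT
      apply Finset.ext
      intro i
      constructor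
      · intro hiS
        by_contra hiT
        have h1 := hωS i; have h2 := hωT i
        rw [if_pos hiS] at h1; rw [if_neg hiT] at h2
        exact absurd h1.2 (not_le.mpr h2)
      · intro hiT
        by_contra hiS
        have h1 := hωS i; have h2 := hωT i
        rw [if_neg hiS] at h1; rw [if_pos hiT] at h2
        exact absurd h2.2 (not_le.mpr h1)
    have hmeas : ∀ S ∈ (Finset.range (n - k + 1)).biUnion
          (fun m => Finset.powersetCard m (Finset.univ : Finset (Fin n))),
        MeasurableSet (⋂ i, Z i ⁻¹' (if i ∈ S then Set.Ioc t z else Set.Ioi z)) :=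
      fun S _ => MeasurableSet.iInter fun i => (hZm i) (hBmeas S i)
    rw [hset, measure_biUnion_finset hdisj hmeas,
      ENNReal.toReal_sum (fun S _ => measure_ne_top P _)]
    have hPS : ∀ S : Finset (Fin n),
        (P (⋂ i, Z i ⁻¹' (if i ∈ S then Set.Ioc t z else Set.Ioi z))).toReal
          = (F z - F t) ^ S.card * (1 - F z) ^ (n - S.card) := by
      intro S
      rw [hindep.meas_iInter (fun i => ⟨_, hBmeas S i, rfl⟩), ENNReal.toReal_prod]
      have : ∀ i : Fin n, (P (Z i ⁻¹' (if i ∈ S then Set.Ioc t z else Set.Ioi z))).toReal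
          = if i ∈ S then F z - F t else 1 - F z := by
        intro i
        split_ifs with hi
        · exact hIoc i t z hz.le
        · exact hIoi i z
      simp_rw [this]
      rw [Finset.prod_ite (fun _ => F z - F t) (fun _ => 1 - F z),
        Finset.prod_const, Finset.prod_const, Finset.filter_univ_mem]
      congr 2
      have : Finset.univ.filter (fun i => i ∉ S) = Sᶜ := by ext i; simp
      rw [this, Finset.card_compl, Fintype.card_fin]
    simp_rw [hPS]
    rw [Finset.sum_biUnion ((Finset.pairwise_disjoint_powersetCard Finset.univ).set_pairwise _)]
    apply Finset.sum_congr rfl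
    intro m hm
    rw [Finset.sum_powersetCard m Finset.univ
      (fun c => (F z - F t) ^ c * (1 - F z) ^ (n - c)), Finset.card_univ, Fintype.card_fin,
      nsmul_eq_mul]
  -- layercake: the numerator
  have hnum : (∫ ω in {ω | t < orderStat Z 1 ω}, (orderStat Z (n - k + 1) ω - t) ∂P)
      = ∫ z in Set.Ioi t, ∑ m ∈ Finset.range (n - k + 1),
          (n.choose m : ℝ) * ((F z - F t) ^ m * (1 - F z) ^ (n - m)) := by
    have hj1 : 1 ≤ n - k + 1 := by omega
    have hjn : n - k + 1 ≤ n := by omega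
    have hXm : Measurable (orderStat Z (n - k + 1)) := measurable_orderStat hZm hj1 hjn
    have hXmem : ∀ ω, ∃ i, orderStat Z (n - k + 1) ω = Z i ω := orderStat_mem Z hj1 hjn
    have hX0 : ∀ ω, 0 ≤ orderStat Z (n - k + 1) ω := by
      intro ω; obtain ⟨i, hi⟩ := hXmem ω; rw [hi]; exact hZ0 i ω
    have hXint : Integrable (orderStat Z (n - k + 1)) P := by
      refine Integrable.mono' (integrable_finset_sum Finset.univ (fun i _ => hZint i))
        hXm.aestronglyMeasurable (ae_of_all _ fun ω => ?_)
      rw [Real.norm_eq_abs, abs_of_nonneg (hX0 ω)]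
      obtain ⟨i, hi⟩ := hXmem ω
      rw [hi]
      exact Finset.single_le_sum (fun i _ => hZ0 i ω) (Finset.mem_univ i)
    have hfint : Integrable (fun ω => orderStat Z (n - k + 1) ω - t)
        (P.restrict {ω | t < orderStat Z 1 ω}) :=
      (hXint.sub (integrable_const t)).restrict
    have hfnn : 0 ≤ᵐ[P.restrict {ω | t < orderStat Z 1 ω}]
        fun ω => orderStat Z (n - k + 1) ω - t := by
      refine (ae_restrict_iff' hAm).mpr (ae_of_all _ fun ω hω => ?_)
      have h1 : t < orderStat Z (n - k + 1) ω :=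
        lt_of_lt_of_le hω (orderStat_one_le Z hj1 hjn ω)
      simp only [Pi.zero_apply]
      linarith
    rw [hfint.integral_eq_integral_meas_lt hfnn]
    set g : ℝ → ℝ :=
      fun z => (P ({ω | z < orderStat Z (n - k + 1) ω} ∩ ⋂ i, Z i ⁻¹' Set.Ioi t)).toReal with hg
    have hmeaseq : ∀ s : ℝ,
        (P.restrict {ω | t < orderStat Z 1 ω} {a | s < orderStat Z (n - k + 1) a - t}).toReal
          = g (s + t) := by
      intro s
      rw [hg, Measure.restrict_apply' hAm, hAeq]
      congr 2
      ext a
      simp only [Set.mem_setOf_eq, lt_sub_iff_add_lt]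
    simp_rw [measureReal_def, hmeaseq]
    have hind : ∀ s : ℝ, (Set.Ioi (0:ℝ)).indicator (fun u => g (u + t)) s
        = (Set.Ioi t).indicator g (s + t) := by
      intro s
      rw [Set.indicator_apply, Set.indicator_apply]
      have : s ∈ Set.Ioi (0:ℝ) ↔ s + t ∈ Set.Ioi t := by
        simp [lt_add_iff_pos_left]
      by_cases hs : s ∈ Set.Ioi (0:ℝ)
      · rw [if_pos hs, if_pos (this.mp hs)]
      · rw [if_neg hs, if_neg (fun h => hs (this.mpr h))]
    have step : ∫ s in Set.Ioi (0:ℝ), g (s + t) = ∫ z in Set.Ioi t, g z := by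
      rw [← integral_indicator measurableSet_Ioi, ← integral_indicator measurableSet_Ioi]
      calc ∫ s, (Set.Ioi (0:ℝ)).indicator (fun u => g (u + t)) s
          = ∫ s, (Set.Ioi t).indicator g (s + t) := by
            congr 1; funext s; exact hind s
        _ = ∫ z, (Set.Ioi t).indicator g z := integral_add_right_eq_self _ t
    rw [step]
    exact setIntegral_congr_fun measurableSet_Ioi fun z hz => hkey z hz
  -- integrability of tail powers
  have hGint : IntegrableOn (fun z => 1 - F z) (Set.Ioi t) volume := by
    have hanti : Antitone fun z : ℝ => P {a | z < Z ⟨0, hn⟩ a} := by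
      intro a b hab
      exact measure_mono fun ω h => lt_of_le_of_lt hab h
    have hlint : ∫⁻ z in Set.Ioi (0:ℝ), P {a | z < Z ⟨0, hn⟩ a} ≠ ⊤ := by
      rw [← lintegral_eq_lintegral_meas_lt P (ae_of_all _ (hZ0 ⟨0, hn⟩))
        (hZm ⟨0, hn⟩).aemeasurable]
      exact (hZint ⟨0, hn⟩).lintegral_lt_top.ne
    have h1 : Integrable (fun z => (P {a | z < Z ⟨0, hn⟩ a}).toReal)
        (volume.restrict (Set.Ioi (0:ℝ))) :=
      integrable_toReal_of_lintegral_ne_top hanti.measurable.aemeasurable hlint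
    have h2 : IntegrableOn (fun z => 1 - F z) (Set.Ioi (0:ℝ)) volume := by
      refine h1.congr (ae_of_all _ fun z => ?_)
      exact hIoi ⟨0, hn⟩ z
    exact h2.mono_set (Set.Ioi_subset_Ioi ht)
  have hGpint : ∀ p : ℕ, 1 ≤ p → IntegrableOn (fun z => (1 - F z) ^ p) (Set.Ioi t) volume := by
    intro p hp
    refine Integrable.mono' hGint
      ((measurable_const.sub hFmono.measurable).pow_const p).aestronglyMeasurable
      (ae_of_all _ fun z => ?_)
    have h0 : 0 ≤ 1 - F z := by linarith [hF1 z]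
    rw [Real.norm_eq_abs, abs_of_nonneg (pow_nonneg h0 p)]
    exact pow_le_of_le_one h0 (by linarith [hF0 z]) (by omega)
  -- final computation
  have hexp : ∀ z : ℝ, ∑ m ∈ Finset.range (n - k + 1),
      (n.choose m : ℝ) * ((F z - F t) ^ m * (1 - F z) ^ (n - m))
    = ∑ m ∈ Finset.range (n - k + 1), ∑ i ∈ Finset.range (m + 1),
        (n.choose m : ℝ) * (m.choose i) * (-1:ℝ) ^ i * (1 - F t) ^ (m - i)
          * (1 - F z) ^ (n - m + i) := by
    intro z
    refine Finset.sum_congr rfl fun m hm => ?_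
    rw [Finset.mem_range] at hm
    have hsub : F z - F t = (-(1 - F z)) + (1 - F t) := by ring
    rw [hsub, add_pow, Finset.sum_mul, Finset.mul_sum]
    refine Finset.sum_congr rfl fun i hi => ?_
    rw [neg_pow, pow_add]
    ring
  have hterm : ∀ m ∈ Finset.range (n - k + 1), ∀ i ∈ Finset.range (m + 1),
      IntegrableOn (fun z => (n.choose m : ℝ) * (m.choose i) * (-1:ℝ) ^ i * (1 - F t) ^ (m - i)
        * (1 - F z) ^ (n - m + i)) (Set.Ioi t) volume := by
    intro m hm i hi
    rw [Finset.mem_range] at hm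
    exact (hGpint (n - m + i) (by omega)).const_mul _
  have hswap : (∫ z in Set.Ioi t, ∑ m ∈ Finset.range (n - k + 1),
        (n.choose m : ℝ) * ((F z - F t) ^ m * (1 - F z) ^ (n - m)))
      = ∑ m ∈ Finset.range (n - k + 1), ∑ i ∈ Finset.range (m + 1),
          (n.choose m : ℝ) * (m.choose i) * (-1:ℝ) ^ i * (1 - F t) ^ (m - i)
            * ∫ z in Set.Ioi t, (1 - F z) ^ (n - m + i) := by
    rw [setIntegral_congr_fun measurableSet_Ioi (fun z _ => hexp z),
      integral_finset_sum _ (fun m hm => integrable_finset_sum _ (fun i hi => hterm m hm i hi))]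
    refine Finset.sum_congr rfl fun m hm => ?_
    rw [integral_finset_sum _ (fun i hi => hterm m hm i hi)]
    refine Finset.sum_congr rfl fun i hi => ?_
    exact integral_const_mul _ _
  rw [hnum, hPA, hswap, Finset.sum_div]
  refine Finset.sum_congr rfl fun m hm => ?_
  rw [Finset.sum_div]
  refine Finset.sum_congr rfl fun i hi => ?_
  rw [Finset.mem_range] at hm hi
  have hFtne : (1 - F t) ≠ 0 := ne_of_gt hFt
  have hpow : (1 - F t) ^ n = (1 - F t) ^ (m - i) * (1 - F t) ^ (n - m + i) := by
    rw [← pow_add]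
    congr 1
    omega
  rw [hpow]
  rw [div_eq_div_iff (by positivity) (by positivity)]
  ring
end
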